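/- Let V be a lattice of (ℂ*)^n (i.e. Log maps V isomorphically onto a rank n−1 lattice in the trace-zero hyperplane) and C > 0. Then for almost every y ∈ ℂ^n (with respect to Lebesgue measure on ℂ^n ≅ ℝ^{2n}), the set of v ∈ V with |Tr(vy)| ≤ C‖v‖^{1/2} is finite. -/

import Mathlib

open scoped BigOperators

open MeasureTheory Filter Set

private lemma aux_bc {α ι : Type*} [MeasurableSpace α] (μ : MeasureTheory.Measure α) [Countable ι]
    (s : ι → Set α) (h : ∑' i, μ (s i) ≠ ⊤) :
    ∀ᵐ x ∂μ, {i | x ∈ s i}.Finite := by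
  cases finite_or_infinite ι with
  | inl hfin => exact Filter.Eventually.of_forall fun x => Set.toFinite _
  | inr hinf =>
    obtain ⟨d⟩ := nonempty_denumerable ι
    let e : ℕ ≃ ι := (Denumerable.eqv ι).symm
    have h' : ∑' n, μ (s (e n)) ≠ ⊤ := by
      rwa [e.tsum_eq (fun i => μ (s i))]
    filter_upwards [MeasureTheory.ae_eventually_notMem h'] with x hx
    obtain ⟨N, hN⟩ := Filter.eventually_atTop.mp hx
    have hsub : {i | x ∈ s i} ⊆ e '' (Set.Iio N) := by
      intro i hi
      refine ⟨e.symm i, ?_, e.apply_symm_apply i⟩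
      by_contra hlt
      exact hN _ (le_of_not_gt hlt) (by simpa using hi)
    exact ((Set.finite_Iio N).image e).subset hsub

private lemma aux_summable_int {r : ℝ} (h0 : 0 ≤ r) (h1 : r < 1) :
    Summable (fun a : ℤ => r ^ a.natAbs) := by
  apply Summable.of_nat_of_neg
  · simpa using summable_geometric_of_lt_one h0 h1
  · simpa using summable_geometric_of_lt_one h0 h1

private lemma aux_summable_pi {r : ℝ} (h0 : 0 ≤ r) (h1 : r < 1) (d : ℕ) :
    Summable (fun k : Fin d → ℤ => ∏ j, r ^ (k j).natAbs) := by
  induction d with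
  | zero =>
    simpa using summable_of_finite_support (Set.toFinite _)
  | succ d ih =>
    have hs := (aux_summable_int h0 h1).mul_of_nonneg ih
      (fun a => pow_nonneg h0 _)
      (fun k => Finset.prod_nonneg fun j _ => pow_nonneg h0 _)
    apply (Equiv.summable_iff (Fin.consEquiv fun _ : Fin (d+1) => ℤ)).mp
    refine hs.congr fun p => ?_
    simp [Fin.consEquiv, Fin.prod_univ_succ]

private lemma aux_slab {n : ℕ} (a : Fin n → ℂ) (i₀ : Fin n) (ha : a i₀ ≠ 0) (ε R : ℝ) :
    volume {y : Fin n → ℂ | ‖∑ i, a i * y i‖ ≤ ε ∧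
        ∀ i, i ≠ i₀ → ‖y i‖ ≤ R}
      ≤ ENNReal.ofReal (ε / ‖a i₀‖) ^ 2 * NNReal.pi *
        (ENNReal.ofReal R ^ 2 * NNReal.pi) ^ (n - 1) := by
  letI dp : DecidablePred (fun i : Fin n => i = i₀) := fun i =>
    inferInstanceAs (Decidable (i = i₀))
  letI ft1 : Fintype {i : Fin n // i = i₀} := Subtype.fintype _
  letI ft2 : Fintype {i : Fin n // ¬ i = i₀} := Subtype.fintype _
  set T : Set (Fin n → ℂ) := {y | ‖∑ i, a i * y i‖ ≤ ε ∧
      ∀ i, i ≠ i₀ → ‖y i‖ ≤ R} with hT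
  have hcont : Continuous fun y : Fin n → ℂ => ‖∑ i, a i * y i‖ :=
    continuous_norm.comp
      (continuous_finset_sum _ fun i _ => continuous_const.mul (continuous_apply i))
  have hTm : MeasurableSet T := by
    have hEq : T = {y : Fin n → ℂ | ‖∑ i, a i * y i‖ ≤ ε} ∩
        ⋂ (i : Fin n) (_ : i ≠ i₀), {y : Fin n → ℂ | ‖y i‖ ≤ R} := by
      ext y; simp [hT]
    rw [hEq]
    exact (measurableSet_le hcont.measurable measurable_const).inter
      (MeasurableSet.iInter fun i => MeasurableSet.iInter fun _ =>
        measurableSet_le ((continuous_norm.comp (continuous_apply i)).measurable)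
          measurable_const)
  set e := MeasurableEquiv.piEquivPiSubtypeProd (π := fun _ : Fin n => ℂ) (fun i => i = i₀)
    with he
  have hmp := MeasureTheory.volume_preserving_piEquivPiSubtypeProd (fun _ : Fin n => ℂ)
    (fun i => i = i₀)
  have hy : ∀ (z : {i // i = i₀} → ℂ) (w : {i // ¬ i = i₀} → ℂ) (i : Fin n),
      (e.symm (z, w)) i = if h : i = i₀ then z ⟨i, h⟩ else w ⟨i, h⟩ := fun z w i => rfl
  have hSm : MeasurableSet (e.symm ⁻¹' T) := e.symm.measurable hTm
  have hvol : volume T = volume (e.symm ⁻¹' T) := ((hmp.symm e).measure_preimage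
    hTm.nullMeasurableSet).symm
  set Dvol : ENNReal := ENNReal.ofReal (ε / ‖a i₀‖) ^ 2 * NNReal.pi with hD
  set B : Set ({i : Fin n // ¬ i = i₀} → ℂ) := Set.univ.pi (fun _ => Metric.closedBall (0:ℂ) R)
    with hB
  have hBm : MeasurableSet B := MeasurableSet.univ_pi fun _ => measurableSet_closedBall
  have hslice : ∀ w : {i : Fin n // ¬ i = i₀} → ℂ,
      volume ((fun z => (z, w)) ⁻¹' (e.symm ⁻¹' T)) ≤ B.indicator (fun _ => Dvol) w := by
    intro w
    by_cases hw : w ∈ B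
    · rw [Set.indicator_of_mem hw]
      set b : ℂ := ∑ i : {i : Fin n // ¬ i = i₀}, a i.1 * w i with hb
      have hsum : ∀ z : {i : Fin n // i = i₀} → ℂ,
          ∑ i, a i * (e.symm (z, w)) i = a i₀ * z ⟨i₀, rfl⟩ + b := by
        intro z
        rw [← Finset.add_sum_erase _ _ (Finset.mem_univ i₀)]
        congr 1
        · rw [hy z w i₀, dif_pos rfl]
        · rw [hb, Finset.sum_subtype (p := fun i => ¬ i = i₀) (Finset.univ.erase i₀)
            (fun x => by simp) (fun i => a i * (e.symm (z, w)) i)]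
          refine Finset.sum_congr rfl fun i _ => ?_
          rw [hy z w i.1, dif_neg i.2, Subtype.coe_eta]
      have hpos : 0 < ‖a i₀‖ := norm_pos_iff.mpr ha
      have hsubset : ((fun z => (z, w)) ⁻¹' (e.symm ⁻¹' T)) ⊆
          (MeasurableEquiv.piUnique (fun _ : {i : Fin n // i = i₀} => ℂ)) ⁻¹'
            (Metric.closedBall (-(b / a i₀)) (ε / ‖a i₀‖)) := by
        intro z hz
        have h1 : ‖a i₀ * z ⟨i₀, rfl⟩ + b‖ ≤ ε := by
          have h0 := hz.1
          rwa [hsum z] at h0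
        have hfac : a i₀ * z ⟨i₀, rfl⟩ + b = a i₀ * (z ⟨i₀, rfl⟩ + b / a i₀) := by
          field_simp
        simp only [Set.mem_preimage, Metric.mem_closedBall]
        have hzz : (MeasurableEquiv.piUnique (fun _ : {i : Fin n // i = i₀} => ℂ)) z
            = z ⟨i₀, rfl⟩ := rfl
        rw [hzz, Complex.dist_eq, sub_neg_eq_add, le_div_iff₀ hpos, mul_comm,
          ← norm_mul, ← hfac]
        exact h1
      calc volume ((fun z => (z, w)) ⁻¹' (e.symm ⁻¹' T))
          ≤ volume ((MeasurableEquiv.piUnique (fun _ : {i : Fin n // i = i₀} => ℂ)) ⁻¹'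
            (Metric.closedBall (-(b / a i₀)) (ε / ‖a i₀‖))) :=
            measure_mono hsubset
        _ = volume (Metric.closedBall (-(b / a i₀)) (ε / ‖a i₀‖)) :=
            (volume_preserving_piUnique _).measure_preimage
              measurableSet_closedBall.nullMeasurableSet
        _ = Dvol := by rw [Complex.volume_closedBall, hD]
    · rw [Set.indicator_of_notMem hw]
      have hempty : ((fun z : {i : Fin n // i = i₀} → ℂ => (z, w)) ⁻¹' (e.symm ⁻¹' T)) = ∅ := by
        ext z
        simp only [Set.mem_preimage, Set.mem_empty_iff_false, iff_false]
        intro hz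
        apply hw
        intro i _
        have h2 := hz.2 i.1 i.2
        rw [hy z w i.1, dif_neg i.2, Subtype.coe_eta] at h2
        simpa [Complex.dist_eq] using h2
      rw [hempty]
      simp
  have hcard : Fintype.card {i : Fin n // ¬ i = i₀} = n - 1 := by
    rw [Fintype.card_subtype_compl]
    simp [Fintype.card_subtype_eq]
  have hvolB : volume B = (ENNReal.ofReal R ^ 2 * NNReal.pi) ^ (n - 1) := by
    rw [hB, volume_pi_pi]
    simp [Complex.volume_closedBall, Finset.prod_const, hcard]
  calc volume T = volume (e.symm ⁻¹' T) := hvol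
    _ = ∫⁻ w, volume ((fun z => (z, w)) ⁻¹' (e.symm ⁻¹' T)) := by
        rw [Measure.volume_eq_prod, Measure.prod_apply_symm hSm]
    _ ≤ ∫⁻ w, B.indicator (fun _ => Dvol) w := lintegral_mono hslice
    _ = Dvol * volume B := lintegral_indicator_const hBm Dvol
    _ = Dvol * (ENNReal.ofReal R ^ 2 * NNReal.pi) ^ (n - 1) := by rw [hvolB]

private lemma aux_growth (n : ℕ) (hn : 2 ≤ n)
    (v : (Fin (n - 1) → ℤ) → (Fin n → ℂ))
    (hmul : ∀ k l, v (k + l) = v k * v l)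
    (hne : ∀ k i, v k i ≠ 0)
    (htrace : ∀ k, ∑ i, Real.log (‖v k i‖) = 0)
    (hind : LinearIndependent ℝ
      (fun j : Fin (n - 1) => fun i : Fin n => Real.log (‖v (Pi.single j 1) i‖))) :
    ∃ r : ℝ, 0 ≤ r ∧ r < 1 ∧ ∀ k, 1 / ‖v k‖ ≤ ∏ j, r ^ (k j).natAbs := by
  classical
  have hd1 : 1 ≤ n - 1 := by omega
  set w : Fin (n-1) → (Fin n → ℝ) := fun j i => Real.log (‖v (Pi.single j 1) i‖) with hw
  set f : (Fin (n-1) → ℤ) → (Fin n → ℝ) := fun k i => Real.log (‖v k i‖) with hf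
  have hadd : ∀ k l, f (k + l) = f k + f l := by
    intro k l; funext i
    have hv : v (k + l) i = v k i * v l i := by rw [hmul]; rfl
    simp only [hf, Pi.add_apply, hv, map_mul, norm_mul]
    exact Real.log_mul (norm_ne_zero_iff.mpr (hne k i)) (norm_ne_zero_iff.mpr (hne l i))
  set F : (Fin (n-1) → ℤ) →+ (Fin n → ℝ) := AddMonoidHom.mk' f hadd with hF
  have hrepr : ∀ k, f k = ∑ j, (k j : ℝ) • w j := by
    intro k
    have h1 : k = ∑ j, (k j) • Pi.single j (1:ℤ) := by
      conv_lhs => rw [← Finset.univ_sum_single k]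
      refine Finset.sum_congr rfl fun j _ => ?_
      rw [← Pi.single_smul, smul_eq_mul, mul_one]
    calc f k = F k := rfl
      _ = F (∑ j, (k j) • Pi.single j (1:ℤ)) := by rw [← h1]
      _ = ∑ j, (k j) • F (Pi.single j (1:ℤ)) := by
          rw [map_sum]
          exact Finset.sum_congr rfl fun j _ => map_zsmul F _ _
      _ = ∑ j, (k j : ℝ) • w j := by
          refine Finset.sum_congr rfl fun j _ => ?_
          rw [Int.cast_smul_eq_zsmul ℝ]
          rfl
  have hker : LinearMap.ker (Fintype.linearCombination ℝ w) = ⊥ := by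
    rw [LinearMap.ker_eq_bot']
    intro g hg
    rw [Fintype.linearCombination_apply] at hg
    have h0 := Fintype.linearIndependent_iff.mp hind g hg
    funext j; exact h0 j
  obtain ⟨K, hK0, hKa⟩ := LinearMap.exists_antilipschitzWith _ hker
  have hKR : (0:ℝ) < K := by exact_mod_cast hK0
  have hnR : (0:ℝ) < n := by exact_mod_cast (by omega : 0 < n)
  have hdR : (0:ℝ) < ((n-1:ℕ):ℝ) := by exact_mod_cast (by omega : 0 < n - 1)
  have hxle : ∀ x : Fin (n-1) → ℝ, ‖x‖ ≤ K * ‖Fintype.linearCombination ℝ w x‖ := by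
    intro x
    have h3 := hKa.le_mul_dist x 0
    simpa [dist_zero_right, map_zero] using h3
  have hKnd : (0:ℝ) < (K:ℝ) * n * ((n-1:ℕ):ℝ) := by positivity
  set c : ℝ := 1 / ((K:ℝ) * n * ((n-1:ℕ):ℝ)) with hc
  have hcpos : 0 < c := by rw [hc]; positivity
  refine ⟨Real.exp (-c), (Real.exp_pos _).le, ?_, ?_⟩
  · have h4 := Real.exp_lt_exp.mpr (show -c < 0 by linarith)
    simpa [Real.exp_zero] using h4
  intro k
  set x : Fin (n-1) → ℝ := fun j => (k j : ℝ) with hx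
  have hfx : f k = Fintype.linearCombination ℝ w x := by
    rw [hrepr k, Fintype.linearCombination_apply]
  set Sk : ℝ := ∑ j, ((k j).natAbs : ℝ) with hS
  have hSnonneg : 0 ≤ Sk := Finset.sum_nonneg fun j _ => Nat.cast_nonneg _
  have hxnorm : Sk ≤ ((n-1:ℕ):ℝ) * ‖x‖ := by
    calc Sk = ∑ j, ‖x j‖ := by
          refine Finset.sum_congr rfl fun j _ => ?_
          simp [hx, Real.norm_eq_abs, Nat.cast_natAbs]
      _ ≤ ∑ _j : Fin (n-1), ‖x‖ := Finset.sum_le_sum fun j _ => norm_le_pi_norm x j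
      _ = ((n-1:ℕ):ℝ) * ‖x‖ := by simp [Finset.sum_const, Finset.card_univ, nsmul_eq_mul]
  have hnormfk : ‖x‖ ≤ K * ‖f k‖ := by rw [hfx]; exact hxle x
  have hex : ∃ i, ‖f k‖ / n ≤ f k i := by
    obtain ⟨i₁, -, hmax⟩ := Finset.exists_max_image Finset.univ (fun i => |f k i|)
      ⟨⟨0, by omega⟩, Finset.mem_univ _⟩
    have hle1 : ‖f k‖ ≤ |f k i₁| :=
      (pi_norm_le_iff_of_nonneg (abs_nonneg _)).mpr
        (fun i => by simpa [Real.norm_eq_abs] using hmax i (Finset.mem_univ i))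
    by_cases hsign : 0 ≤ f k i₁
    · refine ⟨i₁, ?_⟩
      have habs : |f k i₁| = f k i₁ := abs_of_nonneg hsign
      have hdiv : ‖f k‖ / n ≤ ‖f k‖ := div_le_self (norm_nonneg _) (by exact_mod_cast hn.trans' (by norm_num))
      linarith
    · push_neg at hsign
      have habs : |f k i₁| = - f k i₁ := abs_of_neg hsign
      have hsum0 : ∑ i, f k i = 0 := htrace k
      have hadd' := Finset.add_sum_erase Finset.univ (f k) (Finset.mem_univ i₁)
      have hsum' : ∑ i ∈ Finset.univ.erase i₁, f k i = |f k i₁| := by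
        rw [habs]; linarith
      have hcard' : (Finset.univ.erase i₁).card = n - 1 := by
        rw [Finset.card_erase_of_mem (Finset.mem_univ _), Finset.card_univ, Fintype.card_fin]
      have hnonempty : (Finset.univ.erase i₁).Nonempty := by
        rw [← Finset.card_pos, hcard']
        omega
      have hconst : ∑ _i ∈ Finset.univ.erase i₁, (|f k i₁| / n : ℝ)
          ≤ ∑ i ∈ Finset.univ.erase i₁, f k i := by
        rw [Finset.sum_const, hcard', nsmul_eq_mul, hsum']
        have hM : 0 ≤ |f k i₁| := abs_nonneg _
        have h1n : ((n - 1 : ℕ) : ℝ) ≤ (n:ℝ) := by exact_mod_cast Nat.sub_le n 1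
        calc ((n-1:ℕ):ℝ) * (|f k i₁| / n) ≤ (n:ℝ) * (|f k i₁| / n) := by
              apply mul_le_mul_of_nonneg_right h1n
              positivity
          _ = |f k i₁| := by field_simp
      obtain ⟨i₂, -, hi₂⟩ := Finset.exists_le_of_sum_le hnonempty hconst
      refine ⟨i₂, le_trans ?_ hi₂⟩
      gcongr
  obtain ⟨i, hi⟩ := hex
  have hvpos : 0 < ‖v k i‖ := norm_pos_iff.mpr (hne k i)
  have hnvpos : 0 < ‖v k‖ := lt_of_lt_of_le hvpos
    (by simpa using norm_le_pi_norm (v k) i)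
  have h5 : Real.exp (‖f k‖ / n) ≤ ‖v k‖ := by
    calc Real.exp (‖f k‖ / n) ≤ Real.exp (f k i) := Real.exp_le_exp.mpr hi
      _ = ‖v k i‖ := Real.exp_log hvpos
      _ ≤ ‖v k‖ := by simpa using norm_le_pi_norm (v k) i
  have h7 : Sk ≤ ((n-1:ℕ):ℝ) * ((K:ℝ) * ‖f k‖) := hxnorm.trans
    (mul_le_mul_of_nonneg_left hnormfk (Nat.cast_nonneg (n-1)))
  have h6 : c * Sk ≤ ‖f k‖ / n := by
    have hSkB : Sk ≤ (K:ℝ) * ((n-1:ℕ):ℝ) * ‖f k‖ := h7.trans_eq (by ring)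
    have hK0' : (K:ℝ) ≠ 0 := ne_of_gt hKR
    have hn0' : (n:ℝ) ≠ 0 := ne_of_gt hnR
    have hd0' : ((n-1:ℕ):ℝ) ≠ 0 := ne_of_gt hdR
    calc c * Sk = Sk / ((K:ℝ) * n * ((n-1:ℕ):ℝ)) := by rw [hc]; ring
      _ ≤ ((K:ℝ) * ((n-1:ℕ):ℝ) * ‖f k‖) / ((K:ℝ) * n * ((n-1:ℕ):ℝ)) := by
          gcongr
      _ = ‖f k‖ / n := by
          rw [div_eq_div_iff (ne_of_gt hKnd) (ne_of_gt hnR)]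
          ring
  have h8 : Real.exp (c * Sk) ≤ ‖v k‖ := (Real.exp_le_exp.mpr h6).trans h5
  have h9 : ∏ j, Real.exp (-c) ^ (k j).natAbs = Real.exp (-(c * Sk)) := by
    have hterm : ∀ j : Fin (n-1), Real.exp (-c) ^ (k j).natAbs
        = Real.exp (((k j).natAbs : ℝ) * (-c)) := fun j => (Real.exp_nat_mul _ _).symm
    rw [Finset.prod_congr rfl fun j _ => hterm j, ← Real.exp_sum, ← Finset.sum_mul, ← hS]
    congr 1
    ring
  rw [h9, Real.exp_neg, one_div]
  exact inv_anti₀ (Real.exp_pos _) h8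

/-- Let `V` be a lattice of `(ℂ*)^n` (parametrized as the image of a
multiplicative map `v` on `ℤ^{n-1}`, with nonzero coordinates, logarithms in the trace-zero
hyperplane, and linearly independent logs of the generators) and `C > 0`. Then for almost
every `y ∈ ℂ^n`, the set of `v ∈ V` with `|Tr(vy)| ≤ C ‖v‖^{1/2}` is finite. -/
theorem ae_finite_small_trace_complex_lattice
    (n : ℕ) (hn : 2 ≤ n)
    (v : (Fin (n - 1) → ℤ) → (Fin n → ℂ))
    (hmul : ∀ k l, v (k + l) = v k * v l)
    (hne : ∀ k i, v k i ≠ 0)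
    (htrace : ∀ k, ∑ i, Real.log (‖v k i‖) = 0)
    (hind : LinearIndependent ℝ
      (fun j : Fin (n - 1) => fun i : Fin n => Real.log (‖v (Pi.single j 1) i‖)))
    (C : ℝ) (hC : 0 < C) :
    ∀ᵐ y : Fin n → ℂ ∂MeasureTheory.volume,
      {k : Fin (n - 1) → ℤ |
        ‖∑ i, v k i * y i‖ ≤ C * ‖v k‖ ^ ((1 : ℝ) / 2)}.Finite := by
  classical
  obtain ⟨r, hr0, hr1, hgrow⟩ := aux_growth n hn v hmul hne htrace hind
  have hg_sum : Summable (fun k : Fin (n-1) → ℤ => ∏ j, r ^ (k j).natAbs) :=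
    aux_summable_pi hr0 hr1 _
  have hnv : ∀ k, 0 < ‖v k‖ := by
    intro k
    calc (0:ℝ) < ‖v k ⟨0, by omega⟩‖ := norm_pos_iff.mpr (hne k _)
      _ ≤ ‖v k‖ := by simpa using norm_le_pi_norm (v k) _
  have hmax : ∀ k : Fin (n-1) → ℤ, ∃ i₀ : Fin n,
      ∀ i, ‖v k i‖ ≤ ‖v k i₀‖ := by
    intro k
    obtain ⟨i₀, -, h⟩ := Finset.exists_max_image Finset.univ (fun i => ‖v k i‖)
      ⟨⟨0, by omega⟩, Finset.mem_univ _⟩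
    exact ⟨i₀, fun i => h i (Finset.mem_univ i)⟩
  choose i₀ hi₀ using hmax
  have hnorm_eq : ∀ k, ‖v k‖ = ‖v k (i₀ k)‖ := by
    intro k
    apply le_antisymm
    · exact (pi_norm_le_iff_of_nonneg (norm_nonneg _)).mpr
        (fun i => by simpa using hi₀ k i)
    · simpa using norm_le_pi_norm (v k) (i₀ k)
  set ε : (Fin (n-1) → ℤ) → ℝ := fun k => C * ‖v k‖ ^ ((1:ℝ)/2) with hε
  have hεnonneg : ∀ k, 0 ≤ ε k := fun k =>
    mul_nonneg hC.le (Real.rpow_nonneg (norm_nonneg _) _)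
  set T : (Fin (n-1) → ℤ) → ℕ → Set (Fin n → ℂ) := fun k R =>
    {y | ‖∑ i, v k i * y i‖ ≤ ε k ∧
      ∀ i, i ≠ i₀ k → ‖y i‖ ≤ R} with hTdef
  have hTbound : ∀ (R : ℕ) k, volume (T k R) ≤
      ENNReal.ofReal (C^2 / ‖v k‖) *
        (NNReal.pi * (ENNReal.ofReal (R:ℝ) ^ 2 * NNReal.pi) ^ (n - 1)) := by
    intro R k
    have h1 := aux_slab (v k) (i₀ k) (hne k (i₀ k)) (ε k) (R:ℝ)
    have hs : (‖v k‖ ^ ((1:ℝ)/2))^2 = ‖v k‖ := by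
      rw [← Real.sqrt_eq_rpow]
      exact Real.sq_sqrt (hnv k).le
    have h2 : (ε k / ‖v k (i₀ k)‖) ^ 2 = C^2 / ‖v k‖ := by
      rw [← hnorm_eq k, hε, div_pow, mul_pow, hs]
      rw [pow_two ‖v k‖, ← div_div, mul_div_assoc, div_self (ne_of_gt (hnv k)), mul_one]
    have h3 : ENNReal.ofReal (ε k / ‖v k (i₀ k)‖) ^ 2
        = ENNReal.ofReal (C^2 / ‖v k‖) := by
      rw [← ENNReal.ofReal_pow (div_nonneg (hεnonneg k) (norm_nonneg _)), h2]
    calc volume (T k R) ≤ _ := h1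
      _ = ENNReal.ofReal (C^2 / ‖v k‖) *
          (NNReal.pi * (ENNReal.ofReal (R:ℝ) ^ 2 * NNReal.pi) ^ (n - 1)) := by
        rw [h3, mul_assoc]
  have htsum : ∀ R : ℕ, ∑' k, volume (T k R) ≠ ⊤ := by
    intro R
    have hle : ∀ k, volume (T k R) ≤
        ENNReal.ofReal (C^2 * ∏ j, r ^ (k j).natAbs) *
          (NNReal.pi * (ENNReal.ofReal (R:ℝ) ^ 2 * NNReal.pi) ^ (n - 1)) := by
      intro k
      refine (hTbound R k).trans ?_
      refine mul_le_mul_left (ENNReal.ofReal_le_ofReal ?_) _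
      rw [div_eq_mul_one_div]
      exact mul_le_mul_of_nonneg_left (hgrow k) (sq_nonneg C)
    have hsum2 : Summable (fun k : Fin (n-1) → ℤ => C^2 * ∏ j, r ^ (k j).natAbs) :=
      hg_sum.mul_left _
    have hboundall : ∑' k, volume (T k R) ≤
        ENNReal.ofReal (∑' k : Fin (n-1) → ℤ, C^2 * ∏ j, r ^ (k j).natAbs) *
          (NNReal.pi * (ENNReal.ofReal (R:ℝ) ^ 2 * NNReal.pi) ^ (n - 1)) := by
      calc ∑' k, volume (T k R)
          ≤ ∑' k : Fin (n-1) → ℤ, ENNReal.ofReal (C^2 * ∏ j, r ^ (k j).natAbs) *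
            (NNReal.pi * (ENNReal.ofReal (R:ℝ) ^ 2 * NNReal.pi) ^ (n - 1)) :=
          ENNReal.tsum_le_tsum hle
        _ = (∑' k : Fin (n-1) → ℤ, ENNReal.ofReal (C^2 * ∏ j, r ^ (k j).natAbs)) *
            (NNReal.pi * (ENNReal.ofReal (R:ℝ) ^ 2 * NNReal.pi) ^ (n - 1)) :=
          ENNReal.tsum_mul_right
        _ = ENNReal.ofReal (∑' k : Fin (n-1) → ℤ, C^2 * ∏ j, r ^ (k j).natAbs) *
            (NNReal.pi * (ENNReal.ofReal (R:ℝ) ^ 2 * NNReal.pi) ^ (n - 1)) := by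
          rw [ENNReal.ofReal_tsum_of_nonneg
            (fun k => mul_nonneg (sq_nonneg C) (Finset.prod_nonneg fun j _ => pow_nonneg hr0 _))
            hsum2]
    refine ne_top_of_le_ne_top ?_ hboundall
    apply ENNReal.mul_ne_top ENNReal.ofReal_ne_top
    apply ENNReal.mul_ne_top ENNReal.coe_ne_top
    apply ENNReal.pow_ne_top
    exact ENNReal.mul_ne_top (ENNReal.pow_ne_top ENNReal.ofReal_ne_top) ENNReal.coe_ne_top
  have hae : ∀ᵐ y : Fin n → ℂ ∂volume, ∀ R : ℕ, {k | y ∈ T k R}.Finite := by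
    rw [MeasureTheory.ae_all_iff]
    exact fun R => aux_bc volume (fun k => T k R) (htsum R)
  filter_upwards [hae] with y hy
  obtain ⟨R, hR⟩ : ∃ R : ℕ, ∀ i, ‖y i‖ ≤ R := by
    obtain ⟨R, hR⟩ := exists_nat_ge (∑ i, ‖y i‖)
    refine ⟨R, fun i => le_trans ?_ hR⟩
    exact Finset.single_le_sum (fun i _ => norm_nonneg _) (Finset.mem_univ i)
  apply (hy R).subset
  intro k hk
  exact ⟨hk, fun i _ => hR i⟩
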